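/- arXiv:1508.00860 — 4 statements merged into one kernel-verified Lean document; each statement's English description precedes it below -/
import Mathlib

section
/- Let d ≥ 2 and let S be the swap operator on ℂ^d ⊗ ℂ^d. For z₁, z₂ ∈ ℂ, the matrix U := z₁ I + z₂ S is unitary if and only if there exist λ ∈ [0,1] and φ ∈ [0,2π) such that z₁ = e^{iφ}√λ and z₂ = ± i e^{iφ}√(1−λ). -/
/-- The swap operator on `ℂ^d ⊗ ℂ^d`. -/
def swapMatrix (d : ℕ) : Matrix (Fin d × Fin d) (Fin d × Fin d) ℂ :=
  fun p q => if p.1 = q.2 ∧ p.2 = q.1 then 1 else 0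

lemma swap_sq (d : ℕ) : swapMatrix d * swapMatrix d = 1 := by
  ext p q
  rw [Matrix.mul_apply]
  rw [Finset.sum_eq_single (p.2, p.1)]
  · simp [swapMatrix, Matrix.one_apply, Prod.ext_iff, eq_comm, and_comm]
  · intro r _ hr
    simp only [swapMatrix]
    rw [if_neg, zero_mul]
    rintro ⟨h1, h2⟩
    exact hr (by simp [Prod.ext_iff, ← h1, ← h2])
  · simp

lemma swap_star (d : ℕ) : star (swapMatrix d) = swapMatrix d := by
  ext p q
  simp only [Matrix.star_apply, swapMatrix]
  split_ifs with h1 h2 h2 <;> simp_all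

lemma expandU (d : ℕ) (z₁ z₂ : ℂ) :
    star (z₁ • (1 : Matrix (Fin d × Fin d) (Fin d × Fin d) ℂ) + z₂ • swapMatrix d) *
      (z₁ • 1 + z₂ • swapMatrix d)
    = ((starRingEnd ℂ) z₁ * z₁ + (starRingEnd ℂ) z₂ * z₂) • 1
      + ((starRingEnd ℂ) z₁ * z₂ + (starRingEnd ℂ) z₂ * z₁) • swapMatrix d := by
  rw [star_add, star_smul, star_smul, star_one, swap_star]
  rw [add_mul, mul_add, mul_add]
  simp only [Matrix.smul_mul, Matrix.mul_smul, swap_sq, one_mul, mul_one, smul_smul]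
  simp only [RCLike.star_def, add_smul]
  module

lemma indepIS (d : ℕ) (hd : 2 ≤ d) (a b : ℂ)
    (h : a • (1 : Matrix (Fin d × Fin d) (Fin d × Fin d) ℂ) + b • swapMatrix d = 1) :
    a = 1 ∧ b = 0 := by
  have h1 := congrFun (congrFun h (⟨0, by omega⟩, ⟨1, by omega⟩)) (⟨1, by omega⟩, ⟨0, by omega⟩)
  have h2 := congrFun (congrFun h (⟨0, by omega⟩, ⟨0, by omega⟩)) (⟨0, by omega⟩, ⟨0, by omega⟩)
  simp [Matrix.add_apply, Matrix.smul_apply, Matrix.one_apply, swapMatrix, Prod.ext_iff,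
    Fin.ext_iff] at h1 h2
  exact ⟨by linear_combination h2 - h1, h1⟩

lemma expA (z : ℂ) : ∃ φ ∈ Set.Ico (0:ℝ) (2*Real.pi),
    z = Complex.exp (Complex.I * φ) * (‖z‖ : ℂ) := by
  have hpi := Real.pi_pos
  have key : z = Complex.exp (Complex.I * z.arg) * (‖z‖ : ℂ) := by
    rw [mul_comm Complex.I, mul_comm, Complex.norm_mul_exp_arg_mul_I]
  rcases eq_or_ne z 0 with rfl | hz
  · exact ⟨0, ⟨le_refl _, by positivity⟩, by simp⟩
  by_cases h : 0 ≤ z.arg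
  · exact ⟨z.arg, ⟨h, lt_of_le_of_lt (Complex.arg_le_pi z) (by linarith)⟩, key⟩
  · refine ⟨z.arg + 2*Real.pi, ⟨by nlinarith [Complex.neg_pi_lt_arg z], by linarith [not_le.mp h]⟩, ?_⟩
    push_cast
    rw [mul_add, Complex.exp_add]
    have h2 : Complex.exp (Complex.I * (2*Real.pi)) = 1 := by
      rw [mul_comm]; exact_mod_cast Complex.exp_two_pi_mul_I
    rw [h2, mul_one]; exact key

lemma hI' : Complex.exp (Complex.I * ((Real.pi : ℂ)/2)) = Complex.I := by
  rw [mul_comm, Complex.exp_mul_I]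
  simp [Complex.cos_pi_div_two, Complex.sin_pi_div_two]

lemma h3I' : Complex.exp (Complex.I * (3*(Real.pi:ℂ)/2)) = -Complex.I := by
  rw [show Complex.I * (3*(Real.pi:ℂ)/2) = (Real.pi:ℂ)*Complex.I + Complex.I * ((Real.pi:ℂ)/2) by ring]
  rw [Complex.exp_add, Complex.exp_pi_mul_I, hI']
  ring

lemma expB (z : ℂ) : ∃ φ ∈ Set.Ico (0:ℝ) (2*Real.pi),
    z = Complex.I * Complex.exp (Complex.I * φ) * (‖z‖ : ℂ) := by
  have hpi := Real.pi_pos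
  obtain ⟨φ', ⟨h0, h2⟩, hz⟩ := expA z
  by_cases h : Real.pi/2 ≤ φ'
  · refine ⟨φ' - Real.pi/2, ⟨by linarith, by linarith⟩, ?_⟩
    suffices hs : Complex.I * Complex.exp (Complex.I * ((φ' - Real.pi/2 : ℝ):ℂ))
        = Complex.exp (Complex.I * (φ':ℂ)) by rw [hs, ← hz]
    push_cast
    rw [mul_sub, Complex.exp_sub, hI']
    rw [mul_comm Complex.I, div_mul_cancel₀ _ Complex.I_ne_zero]
  · refine ⟨φ' + 3*Real.pi/2, ⟨by linarith, by linarith [not_le.mp h]⟩, ?_⟩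
    suffices hs : Complex.I * Complex.exp (Complex.I * ((φ' + 3*Real.pi/2 : ℝ):ℂ))
        = Complex.exp (Complex.I * (φ':ℂ)) by rw [hs, ← hz]
    push_cast
    rw [mul_add, Complex.exp_add, h3I']
    linear_combination (-(Complex.exp (Complex.I * (φ':ℂ)))) * Complex.I_sq

lemma conjexp (φ : ℝ) :
    (starRingEnd ℂ) (Complex.exp (Complex.I * φ)) * Complex.exp (Complex.I * φ) = 1 := by
  rw [← Complex.exp_conj, ← Complex.exp_add]
  simp

theorem stmt_1 (d : ℕ) (hd : 2 ≤ d) (z₁ z₂ : ℂ) :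
    (z₁ • (1 : Matrix (Fin d × Fin d) (Fin d × Fin d) ℂ) + z₂ • swapMatrix d)
      ∈ Matrix.unitaryGroup (Fin d × Fin d) ℂ ↔
    ∃ l ∈ Set.Icc (0:ℝ) 1, ∃ φ ∈ Set.Ico (0:ℝ) (2 * Real.pi),
      z₁ = Complex.exp (Complex.I * φ) * (Real.sqrt l : ℂ) ∧
      (z₂ = Complex.I * Complex.exp (Complex.I * φ) * (Real.sqrt (1 - l) : ℂ) ∨
       z₂ = -(Complex.I * Complex.exp (Complex.I * φ) * (Real.sqrt (1 - l) : ℂ))) := by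
  rw [Matrix.mem_unitaryGroup_iff', expandU]
  constructor
  · intro h
    obtain ⟨hA, hB⟩ := indepIS d hd _ _ h
    -- real normalization
    have hn : Complex.normSq z₁ + Complex.normSq z₂ = 1 := by
      have : ((Complex.normSq z₁ + Complex.normSq z₂ : ℝ) : ℂ) = 1 := by
        push_cast
        rw [← Complex.mul_conj, ← Complex.mul_conj]
        linear_combination hA
      exact_mod_cast this
    set l : ℝ := Complex.normSq z₁ with hl
    have hl0 : 0 ≤ l := Complex.normSq_nonneg z₁
    have hl1 : l ≤ 1 := by have := Complex.normSq_nonneg z₂; linarith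
    have habs1 : Real.sqrt l = ‖z₁‖ := (Complex.norm_def _).symm
    have habs2 : Real.sqrt (1 - l) = ‖z₂‖ := by
      rw [show (1:ℝ) - l = Complex.normSq z₂ by linarith]
      exact (Complex.norm_def _).symm
    rcases eq_or_ne z₁ 0 with hz | hz
    · obtain ⟨φ, hφ, hz₂⟩ := expB z₂
      refine ⟨l, ⟨hl0, hl1⟩, φ, hφ, ?_, Or.inl ?_⟩
      · rw [hz, habs1]; simp [hz]
      · rw [habs2]; exact hz₂
    · obtain ⟨φ, hφ, hz₁⟩ := expA z₁
      set a : ℝ := ‖z₁‖ with ha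
      have ha0 : a ≠ 0 := by simpa [ha] using hz
      set w : ℂ := (starRingEnd ℂ) z₁ * z₂ with hwdef
      have hre : w.re = 0 := by
        have : w + (starRingEnd ℂ) w = 0 := by
          rw [hwdef, map_mul, Complex.conj_conj]
          linear_combination hB
        have h2 := congrArg Complex.re this
        simp [Complex.add_re, Complex.conj_re] at h2
        linarith
      set t : ℝ := w.im with ht
      have hw : w = (t : ℂ) * Complex.I := by
        apply Complex.ext <;> simp [hre, ht]
      set r : ℝ := t / a with hr
      have hra : (t:ℂ) = (r:ℂ) * (a:ℂ) := by
        have : r * a = t := div_mul_cancel₀ t ha0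
        exact_mod_cast this.symm
      have hcne : (starRingEnd ℂ) z₁ ≠ 0 := by
        simpa using hz
      have hz₂ : z₂ = Complex.I * Complex.exp (Complex.I * φ) * (r:ℂ) := by
        apply mul_left_cancel₀ hcne
        rw [← hwdef, hw]
        rw [hz₁]
        rw [map_mul, Complex.conj_ofReal]
        linear_combination Complex.I * hra + (-(Complex.I * (r:ℂ) * (a:ℂ))) * conjexp φ
      have habsr : |r| = Real.sqrt (1 - l) := by
        rw [habs2, hz₂]
        rw [norm_mul, norm_mul, Complex.norm_I, one_mul, Complex.norm_real, Real.norm_eq_abs]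
        rw [show Complex.I * (φ:ℂ) = (φ:ℂ) * Complex.I by ring, Complex.norm_exp_ofReal_mul_I,
          one_mul]
      refine ⟨l, ⟨hl0, hl1⟩, φ, hφ, by rw [habs1]; exact hz₁, ?_⟩
      rcases le_or_gt 0 r with hr0 | hr0
      · left
        rw [hz₂, ← habsr, abs_of_nonneg hr0]
      · right
        rw [hz₂, ← habsr, abs_of_neg hr0]
        push_cast
        ring
  · rintro ⟨l, ⟨hl0, hl1⟩, φ, hφ, hz₁, hz₂⟩
    have hsl : ((Real.sqrt l : ℝ):ℂ) * ((Real.sqrt l : ℝ):ℂ) = (l:ℂ) := by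
      exact_mod_cast congrArg Complex.ofReal (Real.mul_self_sqrt hl0)
    have hsl2 : ((Real.sqrt (1-l) : ℝ):ℂ) * ((Real.sqrt (1-l) : ℝ):ℂ) = 1 - (l:ℂ) := by
      have := Real.mul_self_sqrt (show (0:ℝ) ≤ 1 - l by linarith)
      exact_mod_cast congrArg Complex.ofReal this
    have hce := conjexp φ
    have hA : (starRingEnd ℂ) z₁ * z₁ + (starRingEnd ℂ) z₂ * z₂ = 1 ∧
        (starRingEnd ℂ) z₁ * z₂ + (starRingEnd ℂ) z₂ * z₁ = 0 := by
      rcases hz₂ with hz₂ | hz₂ <;> rw [hz₁, hz₂] <;>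
        refine ⟨?_, by simp only [map_mul, map_neg, Complex.conj_ofReal, Complex.conj_I]; ring⟩ <;>
        · simp only [map_mul, map_neg, Complex.conj_ofReal, Complex.conj_I]
          linear_combination ((Real.sqrt l:ℂ)*(Real.sqrt l:ℂ) - Complex.I^2*(Real.sqrt (1-l):ℂ)*(Real.sqrt (1-l):ℂ)) * hce + hsl + (-Complex.I^2) * hsl2 + (-(1-(l:ℂ))) * Complex.I_sq
    rw [hA.1, hA.2]
    simp
end

section
/- For density matrices ρ₁, ρ₂ on ℂ^d and λ ∈ [0,1], the partial trace over the second system of U_λ (ρ₁ ⊗ ρ₂) U_λ† equals λρ₁ + (1−λ)ρ₂ + √(λ(1−λ)) · i[ρ₂, ρ₁], where U_λ = √λ I + i√(1−λ) S. -/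
/-- Partial trace over the second tensor factor. -/
noncomputable def ptrace2 {d : ℕ} (M : Matrix (Fin d × Fin d) (Fin d × Fin d) ℂ) :
    Matrix (Fin d) (Fin d) ℂ :=
  fun i k => ∑ j : Fin d, M (i, j) (k, j)

open Matrix Kronecker

lemma ptrace2_add {d : ℕ} (M N : Matrix (Fin d × Fin d) (Fin d × Fin d) ℂ) :
    ptrace2 (M + N) = ptrace2 M + ptrace2 N := by
  ext i k; simp [ptrace2, Finset.sum_add_distrib]

lemma ptrace2_smul {d : ℕ} (c : ℂ) (M : Matrix (Fin d × Fin d) (Fin d × Fin d) ℂ) :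
    ptrace2 (c • M) = c • ptrace2 M := by
  ext i k; simp [ptrace2, Finset.mul_sum]

lemma ptrace2_kron {d : ℕ} (A B : Matrix (Fin d) (Fin d) ℂ) :
    ptrace2 (A ⊗ₖ B) = B.trace • A := by
  ext i k
  simp [ptrace2, Matrix.trace, Matrix.diag, Finset.sum_mul, Finset.mul_sum, mul_comm]

lemma swapMatrix_conjTranspose {d : ℕ} : (swapMatrix d)ᴴ = swapMatrix d := by
  ext p q
  simp only [Matrix.conjTranspose_apply, swapMatrix]
  by_cases h : p.1 = q.2 ∧ p.2 = q.1
  · rw [if_pos h, if_pos ⟨h.2.symm, h.1.symm⟩]; simp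
  · rw [if_neg h, if_neg (fun h' => h ⟨h'.2.symm, h'.1.symm⟩)]; simp

lemma swap_kron_swap {d : ℕ} (A B : Matrix (Fin d) (Fin d) ℂ) :
    swapMatrix d * (A ⊗ₖ B) * swapMatrix d = B ⊗ₖ A := by
  ext ⟨i, j⟩ ⟨k, l⟩
  simp [Matrix.mul_apply, swapMatrix, Fintype.sum_prod_type, ite_and, mul_comm]

lemma ptrace2_swap_mul {d : ℕ} (A B : Matrix (Fin d) (Fin d) ℂ) :
    ptrace2 (swapMatrix d * (A ⊗ₖ B)) = B * A := by
  ext i k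
  simp [ptrace2, Matrix.mul_apply, swapMatrix, Fintype.sum_prod_type, ite_and, mul_comm]

lemma ptrace2_mul_swap {d : ℕ} (A B : Matrix (Fin d) (Fin d) ℂ) :
    ptrace2 ((A ⊗ₖ B) * swapMatrix d) = A * B := by
  ext i k
  simp [ptrace2, Matrix.mul_apply, swapMatrix, Fintype.sum_prod_type, ite_and, mul_comm]

open Matrix Kronecker ComplexOrder in
theorem stmt_3 (d : ℕ) (l : ℝ) (hl : l ∈ Set.Icc (0:ℝ) 1)
    (ρ₁ ρ₂ : Matrix (Fin d) (Fin d) ℂ)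
    (h₁ : ρ₁.PosSemidef) (h₁t : ρ₁.trace = 1)
    (h₂ : ρ₂.PosSemidef) (h₂t : ρ₂.trace = 1) :
    let U := (Real.sqrt l : ℂ) • (1 : Matrix (Fin d × Fin d) (Fin d × Fin d) ℂ)
      + (Complex.I * (Real.sqrt (1 - l) : ℂ)) • swapMatrix d
    ptrace2 (U * (ρ₁ ⊗ₖ ρ₂) * Uᴴ)
      = (l : ℂ) • ρ₁ + ((1 - l : ℝ) : ℂ) • ρ₂
        + ((Real.sqrt (l * (1 - l)) : ℂ) * Complex.I) • (ρ₂ * ρ₁ - ρ₁ * ρ₂) := by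
  intro U
  have h0 : (0:ℝ) ≤ l := hl.1
  have h1' : (0:ℝ) ≤ 1 - l := by linarith [hl.2]
  set a : ℂ := (Real.sqrt l : ℂ) with ha
  set b : ℂ := Complex.I * (Real.sqrt (1 - l) : ℂ) with hb
  set S := swapMatrix d with hS
  set M := ρ₁ ⊗ₖ ρ₂ with hM
  have hUH : Uᴴ = a • (1 : Matrix (Fin d × Fin d) (Fin d × Fin d) ℂ) + (-b) • S := by
    simp only [U, Matrix.conjTranspose_add, Matrix.conjTranspose_smul,
      Matrix.conjTranspose_one, hS, swapMatrix_conjTranspose]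
    congr 1
    · congr 1; simp [ha, Complex.ext_iff]
    · congr 1; simp [hb, Complex.ext_iff]
  have expand : U * M * Uᴴ
      = (a * a) • M + ((a * b) • (S * M) + ((a * (-b)) • (M * S) + (b * (-b)) • (S * M * S))) := by
    rw [hUH]
    show (a • 1 + b • S) * M * (a • 1 + (-b) • S) = _
    simp only [Matrix.add_mul, Matrix.mul_add, Matrix.smul_mul, Matrix.mul_smul,
      Matrix.one_mul, Matrix.mul_one, smul_smul, smul_add]
    rw [mul_comm (-b) a, mul_comm (-b) b]
    abel
  have hs1 : (Real.sqrt (1 - l) : ℂ) * (Real.sqrt (1 - l) : ℂ) = ((1 - l : ℝ) : ℂ) := by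
    norm_cast; exact Real.mul_self_sqrt h1'
  have haa : a * a = (l : ℂ) := by
    rw [ha]; norm_cast; exact Real.mul_self_sqrt h0
  have hbb : b * (-b) = ((1 - l : ℝ) : ℂ) := by
    have : b * (-b) = -(Complex.I ^ 2 * ((Real.sqrt (1 - l) : ℂ) * (Real.sqrt (1 - l) : ℂ))) := by
      rw [hb]; ring
    rw [this, Complex.I_sq, hs1]; ring
  have hab : a * b = (Real.sqrt (l * (1 - l)) : ℂ) * Complex.I := by
    rw [ha, hb, Real.sqrt_mul h0]
    push_cast
    ring
  rw [expand, ptrace2_add, ptrace2_add, ptrace2_add, ptrace2_smul, ptrace2_smul,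
    ptrace2_smul, ptrace2_smul, hM, hS, swap_kron_swap, ptrace2_kron, ptrace2_kron,
    ptrace2_swap_mul, ptrace2_mul_swap, h₁t, h₂t, haa, hbb]
  simp only [one_smul, mul_neg, neg_smul, hab, smul_sub]
  abel
end

section
/- Let n ≥ 1, d ≥ n, and z_π ∈ ℂ for π ∈ S_n. Then Σ_π z_π Q_π is unitary on (ℂ^d)^{⊗n} if and only if Σ_π z_π L_π is unitary on ℂ^{S_n}, where L is the left regular representation of S_n. -/
/-- The tensor (permutation) representation of `S_n` on `(ℂ^d)^{⊗n}`. -/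
def tensorPerm (n d : ℕ) (π : Equiv.Perm (Fin n)) :
    Matrix (Fin n → Fin d) (Fin n → Fin d) ℂ :=
  fun x y => if x = y ∘ (π⁻¹ : Equiv.Perm (Fin n)) then 1 else 0

/-- The left regular representation of `S_n`: `L_π |σ⟩ = |π σ⟩`. -/
def leftRegPerm (n : ℕ) (π : Equiv.Perm (Fin n)) :
    Matrix (Equiv.Perm (Fin n)) (Equiv.Perm (Fin n)) ℂ :=
  fun x y => if x = π * y then 1 else 0

open Finset

noncomputable def cc (n : ℕ) (z : Equiv.Perm (Fin n) → ℂ) (σ : Equiv.Perm (Fin n)) : ℂ :=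
  ∑ π : Equiv.Perm (Fin n), (starRingEnd ℂ) (z π) * z (π * σ)

lemma tensor_entry (n d : ℕ) (z : Equiv.Perm (Fin n) → ℂ) (x y : Fin n → Fin d) :
    (star (∑ π : Equiv.Perm (Fin n), z π • tensorPerm n d π) *
      (∑ π : Equiv.Perm (Fin n), z π • tensorPerm n d π)) x y
    = ∑ π : Equiv.Perm (Fin n), ∑ τ : Equiv.Perm (Fin n),
        (starRingEnd ℂ) (z π) * z τ * (if x ∘ ⇑π⁻¹ = y ∘ ⇑τ⁻¹ then 1 else 0) := by
  simp only [Matrix.mul_apply, Matrix.star_apply, Matrix.sum_apply, Matrix.smul_apply,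
    tensorPerm, smul_eq_mul, star_sum, star_mul', Finset.sum_mul_sum]
  rw [Finset.sum_comm]
  refine Finset.sum_congr rfl fun π _ => ?_
  rw [Finset.sum_comm]
  refine Finset.sum_congr rfl fun τ _ => ?_
  simp only [apply_ite (star : ℂ → ℂ), star_one, star_zero, mul_ite, mul_one, mul_zero, ite_mul, zero_mul,
    Finset.sum_ite_eq', Finset.mem_univ, if_true, starRingEnd_apply]
  split_ifs with h1 h2 h3 <;> simp_all

lemma reg_entry (n : ℕ) (z : Equiv.Perm (Fin n) → ℂ) (x y : Equiv.Perm (Fin n)) :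
    (star (∑ π : Equiv.Perm (Fin n), z π • leftRegPerm n π) *
      (∑ π : Equiv.Perm (Fin n), z π • leftRegPerm n π)) x y
    = cc n z (x * y⁻¹) := by
  simp only [Matrix.mul_apply, Matrix.star_apply, Matrix.sum_apply, Matrix.smul_apply,
    leftRegPerm, smul_eq_mul, star_sum, star_mul', Finset.sum_mul_sum, cc]
  rw [Finset.sum_comm]
  refine Finset.sum_congr rfl fun π _ => ?_
  rw [Finset.sum_comm]
  simp only [apply_ite (star : ℂ → ℂ), star_one, star_zero, mul_ite, mul_one, mul_zero,
    ite_mul, zero_mul, Finset.sum_ite_eq', Finset.mem_univ, if_true, starRingEnd_apply]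
  rw [Finset.sum_eq_single (π * (x * y⁻¹))
    (fun τ _ hne => if_neg fun h => hne (by rw [← mul_assoc, eq_mul_inv_iff_mul_eq]; exact h))
    (by simp)]
  rw [if_pos (by group)]

lemma reg_iff (n : ℕ) (z : Equiv.Perm (Fin n) → ℂ) :
    (∑ π : Equiv.Perm (Fin n), z π • leftRegPerm n π)
        ∈ Matrix.unitaryGroup (Equiv.Perm (Fin n)) ℂ ↔
    ∀ σ : Equiv.Perm (Fin n), cc n z σ = if σ = 1 then 1 else 0 := by
  rw [Matrix.mem_unitaryGroup_iff', ← Matrix.ext_iff]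
  constructor
  · intro h σ
    have := h σ 1
    rw [reg_entry] at this
    simpa [Matrix.one_apply] using this
  · intro h i j
    rw [reg_entry, h (i * j⁻¹)]
    simp [Matrix.one_apply, mul_inv_eq_one]

lemma tensor_iff (n d : ℕ) (hd : n ≤ d) (z : Equiv.Perm (Fin n) → ℂ) :
    (∑ π : Equiv.Perm (Fin n), z π • tensorPerm n d π)
        ∈ Matrix.unitaryGroup (Fin n → Fin d) ℂ ↔
    ∀ σ : Equiv.Perm (Fin n), cc n z σ = if σ = 1 then 1 else 0 := by
  have hinj : Function.Injective (Fin.castLE hd) := Fin.castLE_injective hd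
  rw [Matrix.mem_unitaryGroup_iff', ← Matrix.ext_iff]
  constructor
  · intro h σ
    have key := h (Fin.castLE hd ∘ ⇑σ⁻¹) (Fin.castLE hd)
    rw [tensor_entry] at key
    have hL : (∑ π : Equiv.Perm (Fin n), ∑ τ : Equiv.Perm (Fin n),
        (starRingEnd ℂ) (z π) * z τ *
          (if (Fin.castLE hd ∘ ⇑σ⁻¹) ∘ ⇑π⁻¹ = Fin.castLE hd ∘ ⇑τ⁻¹ then 1 else 0))
        = cc n z σ := by
      refine Finset.sum_congr rfl fun π _ => ?_
      rw [Finset.sum_eq_single (π * σ)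
        (fun τ _ hne => by
          rw [if_neg, mul_zero]
          intro hc
          apply hne
          have h1 : ⇑σ⁻¹ ∘ ⇑π⁻¹ = ⇑τ⁻¹ := hinj.comp_left hc
          have h2 : (π * σ)⁻¹ = τ⁻¹ := Equiv.coe_inj.mp (by
            rw [mul_inv_rev, Equiv.Perm.coe_mul]; exact h1)
          exact (inv_inj.mp h2).symm)
        (by simp)]
      rw [if_pos (by rw [mul_inv_rev, Equiv.Perm.coe_mul]; rfl), mul_one]
    rw [hL] at key
    rw [key, Matrix.one_apply]
    congr 1
    simp only [eq_iff_iff]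
    constructor
    · intro hc
      have h1 : ⇑σ⁻¹ = id := hinj.comp_left (by
        show Fin.castLE hd ∘ ⇑σ⁻¹ = Fin.castLE hd ∘ id
        rw [Function.comp_id]; exact hc)
      have : σ⁻¹ = 1 := Equiv.coe_inj.mp (by rw [Equiv.Perm.coe_one]; exact h1)
      simpa [inv_eq_one] using this
    · intro hc
      subst hc
      simp
  · intro h x y
    rw [tensor_entry]
    have hre : ∀ π : Equiv.Perm (Fin n),
        (∑ τ : Equiv.Perm (Fin n),
          (starRingEnd ℂ) (z π) * z τ * (if x ∘ ⇑π⁻¹ = y ∘ ⇑τ⁻¹ then 1 else 0))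
        = ∑ σ : Equiv.Perm (Fin n),
          (starRingEnd ℂ) (z π) * z (π * σ) * (if x = y ∘ ⇑σ⁻¹ then 1 else 0) := by
      intro π
      rw [← Equiv.sum_comp (Equiv.mulLeft π)
        (fun τ => (starRingEnd ℂ) (z π) * z τ * (if x ∘ ⇑π⁻¹ = y ∘ ⇑τ⁻¹ then 1 else 0))]
      refine Finset.sum_congr rfl fun σ _ => ?_
      simp only [Equiv.coe_mulLeft]
      have hcond : (x ∘ ⇑π⁻¹ = y ∘ ⇑(π * σ)⁻¹) ↔ (x = y ∘ ⇑σ⁻¹) := by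
        rw [mul_inv_rev, Equiv.Perm.coe_mul]
        constructor
        · intro hc
          funext i
          have := congrFun hc (π i)
          simpa using this
        · intro hc
          rw [hc]
          rfl
      simp only [hcond]
    simp only [hre]
    rw [Finset.sum_comm]
    have : ∀ σ : Equiv.Perm (Fin n),
        (∑ π : Equiv.Perm (Fin n),
          (starRingEnd ℂ) (z π) * z (π * σ) * (if x = y ∘ ⇑σ⁻¹ then 1 else 0))
        = (if σ = 1 then 1 else 0) * (if x = y ∘ ⇑σ⁻¹ then 1 else 0) := by
      intro σ
      rw [← Finset.sum_mul, ← cc, h σ]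
    simp only [this]
    rw [Finset.sum_eq_single (1 : Equiv.Perm (Fin n))
      (fun σ _ hne => by rw [if_neg hne, zero_mul]) (by simp)]
    simp [Matrix.one_apply]

theorem stmt_14 (n d : ℕ) (hn : 1 ≤ n) (hd : n ≤ d)
    (z : Equiv.Perm (Fin n) → ℂ) :
    (∑ π : Equiv.Perm (Fin n), z π • tensorPerm n d π)
        ∈ Matrix.unitaryGroup (Fin n → Fin d) ℂ ↔
    (∑ π : Equiv.Perm (Fin n), z π • leftRegPerm n π)
        ∈ Matrix.unitaryGroup (Equiv.Perm (Fin n)) ℂ := by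
  rw [tensor_iff n d hd z, reg_iff n z]
end

section
/- Let 0 ≤ a ≤ b ≤ c ≤ 1 with a² + b² + c² = 1. If c ≤ 2/3 then a + 1 ≥ b + c, i.e., the Grashof condition a + 1 < b + c fails. -/
theorem stmt_19 (a b c : ℝ) (h0 : 0 ≤ a) (hab : a ≤ b) (hbc : b ≤ c) (hc1 : c ≤ 1)
    (hsum : a ^ 2 + b ^ 2 + c ^ 2 = 1) (hc : c ≤ 2 / 3) :
    a + 1 ≥ b + c := by
  have hb0 : 0 ≤ b := le_trans h0 hab
  have hb : b ≤ 2/3 := le_trans hbc hc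
  have ha2 : a ^ 2 ≥ 1/9 := by nlinarith [mul_nonneg hb0 (sub_nonneg.2 hb), mul_nonneg (le_trans hb0 hbc) (sub_nonneg.2 hc)]
  have ha : a ≥ 1/3 := by nlinarith
  have hbc4 : b * c ≤ 4/9 := by nlinarith
  nlinarith [sq_nonneg (1 + a - b - c)]
end
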